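/- Let X be a finite set, P and Q probability distributions on X with full support, ρ > 0, α = 1/(1+ρ), and Z_Q = ∑_{x} Q(x)^α. Suppose ψ : X → (0,∞) satisfies ψ(x) ≥ a · Z_Q / Q(x)^α for all x, for some a > 0. Then ∑_x P(x) ψ(x)^ρ ≥ 2^{ρ·(H_α(P) + I_α(P,Q) + log a)}. -/

import Mathlib

open Real Finset

theorem stmt4 {X : Type*} [Fintype X]
    (P Q : X → ℝ) (hP : ∀ x, 0 < P x) (hPsum : ∑ x, P x = 1)
    (hQ : ∀ x, 0 < Q x) (hQsum : ∑ x, Q x = 1)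
    (ρ : ℝ) (hρ : 0 < ρ) (α : ℝ) (hα : α = 1 / (1 + ρ))
    (ZQ : ℝ) (hZQ : ZQ = ∑ x, Q x ^ α)
    (ψ : X → ℝ) (hψpos : ∀ x, 0 < ψ x)
    (a : ℝ) (ha : 0 < a) (hψ : ∀ x, ψ x ≥ a * ZQ / Q x ^ α) :
    ∑ x, P x * ψ x ^ ρ ≥
      (2 : ℝ) ^ (ρ * ((1 / (1 - α)) * Real.logb 2 (∑ x, P x ^ α)
        + ((α / (1 - α)) * Real.logb 2
            (∑ x, P x * (∑ x', (Q x' / Q x) ^ α) ^ ((1 - α) / α))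
          - (1 / (1 - α)) * Real.logb 2 (∑ x, P x ^ α))
        + Real.logb 2 a)) := by
  have h1ρ : (0:ℝ) < 1 + ρ := by linarith
  have hαpos : 0 < α := by rw [hα]; positivity
  have hα1 : α < 1 := by rw [hα, div_lt_one h1ρ]; linarith
  have h1mα : (0:ℝ) < 1 - α := by linarith
  have hne : Nonempty X := by
    rcases isEmpty_or_nonempty X with h | h
    · exfalso; rw [Finset.univ_eq_empty, Finset.sum_empty] at hPsum; norm_num at hPsum
    · exact h
  have hZQpos : 0 < ZQ := by
    rw [hZQ]
    exact Finset.sum_pos (fun x _ => rpow_pos_of_pos (hQ x) α) Finset.univ_nonempty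
  have hrat : (1 - α) / α = ρ := by
    rw [hα]; field_simp; ring
  have hrat2 : α / (1 - α) = 1 / ρ := by
    rw [hα]
    rw [show (1:ℝ) - 1 / (1 + ρ) = ρ / (1 + ρ) by field_simp; ring]
    field_simp
  have hinner : ∀ x, (∑ x', (Q x' / Q x) ^ α) = ZQ / Q x ^ α := by
    intro x
    rw [hZQ, Finset.sum_div]
    exact Finset.sum_congr rfl fun x' _ => div_rpow (hQ x').le (hQ x).le α
  have hS : (∑ x, P x * (∑ x', (Q x' / Q x) ^ α) ^ ((1 - α) / α))
      = ∑ x, P x * (ZQ / Q x ^ α) ^ ρ := by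
    exact Finset.sum_congr rfl fun x _ => by rw [hinner x, hrat]
  set S : ℝ := ∑ x, P x * (ZQ / Q x ^ α) ^ ρ with hSdef
  have hSpos : 0 < S := by
    refine Finset.sum_pos (fun x _ => ?_) Finset.univ_nonempty
    exact mul_pos (hP x) (rpow_pos_of_pos (div_pos hZQpos (rpow_pos_of_pos (hQ x) α)) ρ)
  have hexp : ρ * ((1 / (1 - α)) * Real.logb 2 (∑ x, P x ^ α)
        + ((α / (1 - α)) * Real.logb 2
            (∑ x, P x * (∑ x', (Q x' / Q x) ^ α) ^ ((1 - α) / α))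
          - (1 / (1 - α)) * Real.logb 2 (∑ x, P x ^ α))
        + Real.logb 2 a)
      = Real.logb 2 S + ρ * Real.logb 2 a := by
    rw [hS]
    have : ρ * (α / (1 - α)) = 1 := by rw [hrat2]; field_simp
    linear_combination Real.logb 2 S * this
  rw [hexp, Real.rpow_add (by norm_num : (0:ℝ) < 2),
    Real.rpow_logb (by norm_num) (by norm_num) hSpos,
    show ρ * Real.logb 2 a = Real.logb 2 a * ρ from mul_comm _ _,
    Real.rpow_mul (by norm_num : (0:ℝ) ≤ 2),
    Real.rpow_logb (by norm_num) (by norm_num) ha]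
  have hrw : S * a ^ ρ = ∑ x, P x * (a * ZQ / Q x ^ α) ^ ρ := by
    rw [hSdef, Finset.sum_mul]
    refine Finset.sum_congr rfl fun x _ => ?_
    rw [mul_assoc, ← Real.mul_rpow (div_nonneg hZQpos.le (rpow_pos_of_pos (hQ x) α).le) ha.le,
      show ZQ / Q x ^ α * a = a * ZQ / Q x ^ α by ring]
  rw [hrw]
  refine Finset.sum_le_sum fun x _ => ?_
  have hT : 0 ≤ a * ZQ / Q x ^ α := div_nonneg (by positivity) (rpow_pos_of_pos (hQ x) α).le
  exact mul_le_mul_of_nonneg_left (Real.rpow_le_rpow hT (hψ x) hρ.le) (hP x).le
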